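/- Let Q be the (p+q+r)×(p+q+r) diagonal matrix diag(1_{q+r}, −1_p), and let g = [[A, B],[C, D]] (with A of size (q+r)×(q+r), B of size (q+r)×p, C of size p×(q+r), D of size p×p) satisfy ᵀg·Q·g = Q. Let Z be a real (q+r)×p matrix with ᵀZ·Z < 1_p. Then the matrix C·Z + D is invertible, and the matrix gZ := (A·Z + B)·(C·Z + D)⁻¹ again satisfies ᵀ(gZ)·(gZ) < 1_p. -/

import Mathlib

open Matrix

private lemma posdef_conj {n : ℕ} {S : Matrix (Fin n) (Fin n) ℝ} (hS : S.PosDef)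
    {B : Matrix (Fin n) (Fin n) ℝ} (hB : IsUnit B) : (Bᵀ * S * B).PosDef := by
  have hBH : Bᴴ = Bᵀ := conjTranspose_eq_transpose_of_trivial B
  rw [← hBH]
  refine PosDef.of_dotProduct_mulVec_pos ?_ ?_
  · exact isHermitian_conjTranspose_mul_mul B hS.1
  · intro x hx
    have hBx : B *ᵥ x ≠ 0 := by
      intro h
      have := congrArg (fun v => B⁻¹ *ᵥ v) h
      simp only [mulVec_mulVec, Matrix.nonsing_inv_mul B ((isUnit_iff_isUnit_det B).mp hB),
        one_mulVec, mulVec_zero] at this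
      exact hx this
    simpa only [star_mulVec, dotProduct_mulVec, vecMul_vecMul] using hS.dotProduct_mulVec_pos hBx

/-- `O(q+r, p)` acts on the bounded matrix model `{Z : ᵀZ·Z < 1ₚ}` by generalized
fractional linear transformations: `C·Z + D` is invertible and
`gZ = (A·Z+B)(C·Z+D)⁻¹` again lies in the domain. -/
theorem stmt_5 (p q r : ℕ)
    (A : Matrix (Fin (q + r)) (Fin (q + r)) ℝ) (B : Matrix (Fin (q + r)) (Fin p) ℝ)
    (C : Matrix (Fin p) (Fin (q + r)) ℝ) (D : Matrix (Fin p) (Fin p) ℝ)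
    (hg : (fromBlocks A B C D)ᵀ *
        fromBlocks (1 : Matrix (Fin (q + r)) (Fin (q + r)) ℝ) 0 0
          (-(1 : Matrix (Fin p) (Fin p) ℝ)) * fromBlocks A B C D =
      fromBlocks (1 : Matrix (Fin (q + r)) (Fin (q + r)) ℝ) 0 0
        (-(1 : Matrix (Fin p) (Fin p) ℝ)))
    (Z : Matrix (Fin (q + r)) (Fin p) ℝ)
    (hZ : ((1 : Matrix (Fin p) (Fin p) ℝ) - Zᵀ * Z).PosDef) :
    IsUnit (C * Z + D) ∧
      ((1 : Matrix (Fin p) (Fin p) ℝ) -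
        ((A * Z + B) * (C * Z + D)⁻¹)ᵀ * ((A * Z + B) * (C * Z + D)⁻¹)).PosDef := by
  -- extract the block equations
  rw [fromBlocks_transpose, fromBlocks_multiply, fromBlocks_multiply] at hg
  rw [fromBlocks_inj] at hg
  obtain ⟨e1, e2, e3, e4⟩ := hg
  simp only [Matrix.mul_one, Matrix.mul_zero, Matrix.zero_mul, Matrix.one_mul,
    Matrix.mul_neg, Matrix.neg_mul, add_zero, zero_add] at e1 e2 e3 e4
  -- e1 : Aᵀ*A + -(Cᵀ*C) = 1, e2 : Aᵀ*B + -(Cᵀ*D) = 0, e3 : Bᵀ*A + -(Dᵀ*C) = 0,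
  -- e4 : Bᵀ*B + -(Dᵀ*D) = -1
  set M := C * Z + D with hM
  set N := A * Z + B with hN
  have hCC : Cᵀ * C = Aᵀ * A - 1 := by rw [← e1]; abel
  have hCD : Cᵀ * D = Aᵀ * B := by rw [add_neg_eq_zero] at e2; exact e2.symm
  have hDC : Dᵀ * C = Bᵀ * A := by rw [add_neg_eq_zero] at e3; exact e3.symm
  have hDD : Dᵀ * D = 1 + Bᵀ * B := by
    have h : Dᵀ * D - (1 + Bᵀ * B) = -(Bᵀ * B + -(Dᵀ * D)) + -1 := by abel
    rw [e4] at h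
    rwa [neg_neg, add_neg_cancel, sub_eq_zero] at h
  have hCCZ : Cᵀ * (C * Z) = Aᵀ * (A * Z) - Z := by
    rw [← Matrix.mul_assoc, ← Matrix.mul_assoc, hCC, Matrix.sub_mul, Matrix.one_mul]
  have hDCZ : Dᵀ * (C * Z) = Bᵀ * (A * Z) := by
    rw [← Matrix.mul_assoc, hDC, Matrix.mul_assoc]
  have key : Mᵀ * M - Nᵀ * N = 1 - Zᵀ * Z := by
    simp only [hM, hN, transpose_add, transpose_mul, Matrix.add_mul, Matrix.mul_add,
      Matrix.mul_assoc, hCCZ, hCD, hDCZ, hDD, Matrix.mul_sub]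
    abel
  have hMM : (Mᵀ * M).PosDef := by
    have hNN := posSemidef_conjTranspose_mul_self N
    rw [conjTranspose_eq_transpose_of_trivial] at hNN
    have : Mᵀ * M = (1 - Zᵀ * Z) + Nᵀ * N := by
      rw [← key]; abel
    rw [this]
    exact hZ.add_posSemidef hNN
  have hUnit : IsUnit M := by
    rw [Matrix.isUnit_iff_isUnit_det, isUnit_iff_ne_zero]
    intro h
    have : (Mᵀ * M).det = 0 := by rw [det_mul, det_transpose, h, mul_zero]
    exact absurd hMM.det_pos (by rw [this]; exact lt_irrefl 0)
  refine ⟨hUnit, ?_⟩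
  have hdet : IsUnit M.det := (Matrix.isUnit_iff_isUnit_det M).mp hUnit
  have hInv : IsUnit M⁻¹ := Matrix.isUnit_nonsing_inv_iff.mpr hUnit
  have hMW : M * M⁻¹ = 1 := Matrix.mul_nonsing_inv M hdet
  have h1 : (M⁻¹)ᵀ * (Mᵀ * M) * M⁻¹ = 1 := by
    have ha : (M⁻¹)ᵀ * (Mᵀ * M) * M⁻¹ = (M * M⁻¹)ᵀ * (M * M⁻¹) := by
      simp [transpose_mul, Matrix.mul_assoc]
    rw [ha, hMW]; simp
  have h2 : (N * M⁻¹)ᵀ * (N * M⁻¹) = (M⁻¹)ᵀ * (Nᵀ * N) * M⁻¹ := by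
    simp [transpose_mul, Matrix.mul_assoc]
  have hgoal : (1 : Matrix (Fin p) (Fin p) ℝ) - (N * M⁻¹)ᵀ * (N * M⁻¹) =
      (M⁻¹)ᵀ * (1 - Zᵀ * Z) * M⁻¹ := by
    rw [h2, ← key, Matrix.mul_sub, Matrix.sub_mul, h1]
  rw [hgoal]
  exact posdef_conj hZ hInv
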